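/- Under the conditions of the Lagrangian optimization with constraint ΣᵢPᵢ = 1, the unique candidate solution is Pᵢ* = (√(λᵢμᵢ)/γ)·[(γ + Σⱼ(μⱼ + λⱼu))/(Σⱼ√(λⱼμⱼ))] − (μᵢ + λᵢu)/γ for each i = 1..N. -/

import Mathlib

/-- Under the Lagrangian stationarity conditions and the constraint Σᵢ Pᵢ = 1,
the unique candidate solution is the stated Pᵢ*. -/
theorem optimal_allocation (N : ℕ) (hN : 1 ≤ N)
    (lam mu P : Fin N → ℝ) (u gam a β : ℝ)
    (hlam : ∀ i, 0 < lam i) (hmu : ∀ i, 0 < mu i)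
    (hu0 : 0 < u) (hu1 : u < 1) (hgam : 0 < gam) (ha : a < 0)
    (A : Fin N → ℝ) (hA : ∀ i, A i = (gam * P i + mu i + lam i * u) / (2 * u * mu i))
    (hdisc : ∀ i, (A i) ^ 2 > lam i / (mu i * u))
    (hB : (1 - 2 * u * β / (a * gam)) ^ 2 > 1)
    (hstat : ∀ i, -a * mu i * (gam / (2 * mu i * u))
        * (1 - A i / Real.sqrt ((A i) ^ 2 - lam i / (mu i * u))) + β = 0)
    (hsum : ∑ i, P i = 1) :
    ∀ i, P i = Real.sqrt (lam i * mu i) / gam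
          * ((gam + ∑ j, (mu j + lam j * u)) / (∑ j, Real.sqrt (lam j * mu j)))
        - (mu i + lam i * u) / gam := by
  set B : ℝ := 1 - 2 * u * β / (a * gam) with hBdef
  have hB2 : 0 < B ^ 2 - 1 := by linarith
  have hsB : 0 < Real.sqrt (B ^ 2 - 1) := Real.sqrt_pos.mpr hB2
  have hBne : B ≠ 0 := by
    intro h; rw [h] at hB2; norm_num at hB2
  set t : ℝ := B / Real.sqrt (B ^ 2 - 1) with htdef
  have ht2 : t ^ 2 = B ^ 2 / (B ^ 2 - 1) := by
    rw [htdef, div_pow, Real.sq_sqrt hB2.le]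
  -- per-index key identity
  have key : ∀ i, gam * P i = 2 * t * (Real.sqrt (lam i * mu i) * Real.sqrt u)
      - (mu i + lam i * u) := by
    intro i
    have hmi := hmu i
    have hli := hlam i
    have hX : 0 < lam i / (mu i * u) := by positivity
    have hDpos : 0 < (A i) ^ 2 - lam i / (mu i * u) := by linarith [hdisc i]
    have hsD : 0 < Real.sqrt ((A i) ^ 2 - lam i / (mu i * u)) := Real.sqrt_pos.mpr hDpos
    -- from stationarity: A i = B * sqrt D
    have h1 : A i = B * Real.sqrt ((A i) ^ 2 - lam i / (mu i * u)) := by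
      have hs := hstat i
      have hc : -a * mu i * (gam / (2 * mu i * u)) = -a * gam / (2 * u) := by
        field_simp
      rw [hc] at hs
      have hag : a * gam ≠ 0 := mul_ne_zero (ne_of_lt ha) hgam.ne'
      have h2 : 1 - A i / Real.sqrt ((A i) ^ 2 - lam i / (mu i * u)) = 2 * u * β / (a * gam) := by
        have hau : -a * gam / (2 * u) ≠ 0 := by
          apply div_ne_zero _ (by positivity)
          have : 0 < -a * gam := by nlinarith
          exact this.ne'
        field_simp at hs ⊢
        rw [eq_div_iff ha.ne]
        linear_combination -hs
      have h3 : A i / Real.sqrt ((A i) ^ 2 - lam i / (mu i * u)) = B := by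
        rw [hBdef]; linarith
      exact (div_eq_iff hsD.ne').mp h3
    -- squares
    have hD2 : Real.sqrt ((A i) ^ 2 - lam i / (mu i * u)) ^ 2
        = (A i) ^ 2 - lam i / (mu i * u) := Real.sq_sqrt hDpos.le
    have hsq : (A i) ^ 2 * (B ^ 2 - 1) = B ^ 2 * (lam i / (mu i * u)) := by
      have hth : (A i) ^ 2 = B ^ 2 * ((A i) ^ 2 - lam i / (mu i * u)) := by
        linear_combination (A i + B * Real.sqrt ((A i) ^ 2 - lam i / (mu i * u))) * h1
          + B ^ 2 * hD2
      linear_combination -hth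
    have hsX : 0 < Real.sqrt (lam i / (mu i * u)) := Real.sqrt_pos.mpr hX
    -- A i = t * sqrt X
    have h4 : A i = t * Real.sqrt (lam i / (mu i * u)) := by
      have hsq2 : (A i) ^ 2 = (t * Real.sqrt (lam i / (mu i * u))) ^ 2 := by
        rw [mul_pow, ht2, Real.sq_sqrt hX.le]
        have := (eq_div_iff hB2.ne').mpr hsq
        linear_combination this
      rcases sq_eq_sq_iff_eq_or_eq_neg.mp hsq2 with h | h
      · exact h
      · exfalso
        have hz : B * Real.sqrt ((A i) ^ 2 - lam i / (mu i * u))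
            + t * Real.sqrt (lam i / (mu i * u)) = 0 := by linarith [h1, h]
        have : B * (Real.sqrt ((A i) ^ 2 - lam i / (mu i * u))
            + Real.sqrt (lam i / (mu i * u)) / Real.sqrt (B ^ 2 - 1)) = 0 := by
          rw [htdef] at hz
          linear_combination hz
        have hpos : 0 < Real.sqrt ((A i) ^ 2 - lam i / (mu i * u))
            + Real.sqrt (lam i / (mu i * u)) / Real.sqrt (B ^ 2 - 1) := by positivity
        exact hBne (by
          rcases mul_eq_zero.mp this with h' | h'
          · exact h'
          · linarith)
    -- now compute gam * P i
    have h5 : gam * P i = 2 * u * mu i * A i - (mu i + lam i * u) := by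
      have := hA i
      field_simp at this
      linarith [this]
    have h6 : u * mu i * Real.sqrt (lam i / (mu i * u)) = Real.sqrt (lam i * mu i) * Real.sqrt u := by
      rw [← Real.sqrt_mul (mul_nonneg hli.le hmi.le)]
      rw [show u * mu i * Real.sqrt (lam i / (mu i * u))
          = Real.sqrt ((u * mu i) ^ 2 * (lam i / (mu i * u))) from by
        rw [Real.sqrt_mul (by positivity), Real.sqrt_sq (by positivity)]]
      congr 1
      field_simp
    rw [h5, h4]
    rw [show 2 * u * mu i * (t * Real.sqrt (lam i / (mu i * u)))
        = 2 * t * (u * mu i * Real.sqrt (lam i / (mu i * u))) by ring, h6]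
  haveI : NeZero N := ⟨by omega⟩
  have hS : 0 < ∑ j, Real.sqrt (lam j * mu j) :=
    Finset.sum_pos (fun j _ => Real.sqrt_pos.mpr (mul_pos (hlam j) (hmu j))) Finset.univ_nonempty
  have h7 : gam = 2 * t * Real.sqrt u * (∑ j, Real.sqrt (lam j * mu j))
      - (∑ j, (mu j + lam j * u)) := by
    have h := Finset.sum_congr rfl (fun i (_ : i ∈ Finset.univ) => key i)
    rw [← Finset.mul_sum, hsum, mul_one] at h
    rw [h, Finset.sum_sub_distrib]
    congr 1
    rw [Finset.mul_sum]
    exact Finset.sum_congr rfl fun i _ => by ring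
  have h8 : 2 * t * Real.sqrt u
      = (gam + ∑ j, (mu j + lam j * u)) / (∑ j, Real.sqrt (lam j * mu j)) := by
    rw [eq_div_iff hS.ne']
    linarith [h7]
  intro i
  have hk := key i
  have hk2 : gam * P i = Real.sqrt (lam i * mu i) * (2 * t * Real.sqrt u)
      - (mu i + lam i * u) := by linarith [hk]
  rw [h8] at hk2
  field_simp [hS.ne'] at hk2
  field_simp
  linear_combination hk2
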